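/- Removing a dominated Right option preserves equality: if G = {A, B, C, …| G^S | D, E, F, …} with D ≤ E, then G'' = {A, B, C, …| G^S | D, F, …} satisfies G'' = G. -/
import Mathlib


inductive SGame : Type where
  | mk (left right : List SGame) (score : ℝ)

namespace SGame

def leftOpts : SGame → List SGame | mk L _ _ => L
def rightOpts : SGame → List SGame | mk _ R _ => R
def score : SGame → ℝ | mk _ _ s => s

mutual
  /-- Optimal final score when Left moves first. -/
  def leftScore : SGame → ℝ
    | mk [] _ s => s
    | mk (g :: L) _ _ => maxRight g L
  termination_by G => sizeOf G
  decreasing_by all_goals (simp; try omega)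
  def maxRight : SGame → List SGame → ℝ
    | g, [] => rightScore g
    | g, h :: t => max (rightScore g) (maxRight h t)
  termination_by g l => 1 + sizeOf g + sizeOf l
  decreasing_by all_goals (simp; try omega)
  /-- Optimal final score when Right moves first. -/
  def rightScore : SGame → ℝ
    | mk _ [] s => s
    | mk _ (g :: R) _ => minLeft g R
  termination_by G => sizeOf G
  decreasing_by all_goals (simp; try omega)
  def minLeft : SGame → List SGame → ℝ
    | g, [] => leftScore g
    | g, h :: t => min (leftScore g) (minLeft h t)
  termination_by g l => 1 + sizeOf g + sizeOf l
  decreasing_by all_goals (simp; try omega)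
end

/-- Long-rule disjunctive sum. -/
def sum : SGame → SGame → SGame
  | mk L1 R1 s1, mk L2 R2 s2 =>
    mk ((L1.attach.map fun g => sum g.1 (mk L2 R2 s2)) ++
        (L2.attach.map fun h => sum (mk L1 R1 s1) h.1))
       ((R1.attach.map fun g => sum g.1 (mk L2 R2 s2)) ++
        (R2.attach.map fun h => sum (mk L1 R1 s1) h.1))
       (s1 + s2)
termination_by G H => sizeOf G + sizeOf H
decreasing_by
  all_goals simp
  · have := List.sizeOf_lt_of_mem g.2; omega
  · have := List.sizeOf_lt_of_mem h.2; omega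
  · have := List.sizeOf_lt_of_mem g.2; omega
  · have := List.sizeOf_lt_of_mem h.2; omega

end SGame

namespace SGame

/-- The game `{.|0|.}`. -/
def zero : SGame := mk [] [] 0

/-- Negation: `-G = {-G^R | -G^S | -G^L}`. -/
def neg : SGame → SGame
  | mk L R s =>
    mk (R.attach.map fun g => neg g.1) (L.attach.map fun g => neg g.1) (-s)
termination_by G => sizeOf G
decreasing_by
  all_goals (have := List.sizeOf_lt_of_mem g.2; simp; omega)

/-- Identity of game trees (options regarded as sets). -/
def Ident : SGame → SGame → Prop
  | mk L1 R1 s1, mk L2 R2 s2 =>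
    s1 = s2 ∧
    (∀ g ∈ L1.attach, ∃ h ∈ L2.attach, Ident g.1 h.1) ∧
    (∀ h ∈ L2.attach, ∃ g ∈ L1.attach, Ident g.1 h.1) ∧
    (∀ g ∈ R1.attach, ∃ h ∈ R2.attach, Ident g.1 h.1) ∧
    (∀ h ∈ R2.attach, ∃ g ∈ R1.attach, Ident g.1 h.1)
termination_by G H => sizeOf G + sizeOf H
decreasing_by
  all_goals
    (have := List.sizeOf_lt_of_mem g.2; have := List.sizeOf_lt_of_mem h.2
     simp; omega)

inductive Outcome : Type where
  | L | R | N | P | T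
deriving DecidableEq

/-- The outcome class of a game, determined by the signs of its final scores. -/
noncomputable def outcome (G : SGame) : Outcome :=
  if 0 < G.leftScore then
    (if 0 < G.rightScore then .L else if G.rightScore = 0 then .L else .N)
  else if G.leftScore = 0 then
    (if 0 < G.rightScore then .L else if G.rightScore = 0 then .T else .R)
  else
    (if 0 < G.rightScore then .P else .R)

/-- `G ≥ H`. -/
def Ge (G H : SGame) : Prop :=
  ∀ X : SGame,
    (0 ≤ (H.sum X).leftScore → 0 ≤ (G.sum X).leftScore) ∧
    (0 ≤ (H.sum X).rightScore → 0 ≤ (G.sum X).rightScore) ∧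
    (0 < (H.sum X).leftScore → 0 < (G.sum X).leftScore) ∧
    (0 < (H.sum X).rightScore → 0 < (G.sum X).rightScore)

/-- `G ≤ H`. -/
def Le (G H : SGame) : Prop :=
  ∀ X : SGame,
    ((H.sum X).leftScore ≤ 0 → (G.sum X).leftScore ≤ 0) ∧
    ((H.sum X).rightScore ≤ 0 → (G.sum X).rightScore ≤ 0) ∧
    ((H.sum X).leftScore < 0 → (G.sum X).leftScore < 0) ∧
    ((H.sum X).rightScore < 0 → (G.sum X).rightScore < 0)

/-- Game equality: same outcome in every disjunctive-sum context. -/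
def gameEq (G H : SGame) : Prop :=
  ∀ X : SGame, (G.sum X).outcome = (H.sum X).outcome

end SGame

namespace SGame

/-- Every score in the game tree of `G` satisfies `p`. -/
def AllScores (p : ℝ → Prop) : SGame → Prop
  | mk L R s =>
    p s ∧ (∀ g ∈ L.attach, AllScores p g.1) ∧ (∀ g ∈ R.attach, AllScores p g.1)
termination_by G => sizeOf G
decreasing_by all_goals (have := List.sizeOf_lt_of_mem g.2; simp; omega)

/-- `G ≡ H`: identical underlying game trees, with equal scores at all
termination vertices (vertices at which at least one player has no option,
i.e. where the play of some disjunctive sum can end). -/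
def Equiv : SGame → SGame → Prop
  | mk L1 R1 s1, mk L2 R2 s2 =>
    ((L1 = [] ∨ R1 = []) → s1 = s2) ∧
    (∀ g ∈ L1.attach, ∃ h ∈ L2.attach, Equiv g.1 h.1) ∧
    (∀ h ∈ L2.attach, ∃ g ∈ L1.attach, Equiv g.1 h.1) ∧
    (∀ g ∈ R1.attach, ∃ h ∈ R2.attach, Equiv g.1 h.1) ∧
    (∀ h ∈ R2.attach, ∃ g ∈ R1.attach, Equiv g.1 h.1)
termination_by G H => sizeOf G + sizeOf H
decreasing_by
  all_goals
    (have := List.sizeOf_lt_of_mem g.2; have := List.sizeOf_lt_of_mem h.2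
     simp; omega)

/-- `G` is in canonical form: hereditarily, no dominated and no reversible options. -/
def Canonical : SGame → Prop
  | mk L R s =>
    (∀ A ∈ L, ∀ B ∈ L, A ≠ B → ¬ Ge A B) ∧
    (∀ D ∈ R, ∀ E ∈ R, D ≠ E → ¬ Le D E) ∧
    (∀ A ∈ L, ∀ Ar ∈ A.rightOpts, ¬ Le Ar (mk L R s)) ∧
    (∀ D ∈ R, ∀ Dl ∈ D.leftOpts, ¬ Ge Dl (mk L R s)) ∧
    (∀ g ∈ L.attach, Canonical g.1) ∧ (∀ g ∈ R.attach, Canonical g.1)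
termination_by G => sizeOf G
decreasing_by all_goals (have := List.sizeOf_lt_of_mem g.2; simp; omega)

/-- One reduction step: removing a dominated option or bypassing a reversible
option, at the root or in some subposition. -/
inductive Step : SGame → SGame → Prop where
  | domL {L1 L2 : List SGame} {R : List SGame} {s : ℝ} {B : SGame} (A : SGame)
      (hA : A ∈ L1 ++ L2) (h : Ge A B) :
      Step (mk (L1 ++ B :: L2) R s) (mk (L1 ++ L2) R s)
  | domR {R1 R2 : List SGame} {L : List SGame} {s : ℝ} {E : SGame} (D : SGame)
      (hD : D ∈ R1 ++ R2) (h : Le D E) :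
      Step (mk L (R1 ++ E :: R2) s) (mk L (R1 ++ R2) s)
  | revL {L1 L2 : List SGame} {R : List SGame} {s : ℝ} {A Ar : SGame}
      (hAr : Ar ∈ A.rightOpts) (h : Le Ar (mk (L1 ++ A :: L2) R s)) :
      Step (mk (L1 ++ A :: L2) R s) (mk (L1 ++ Ar.leftOpts ++ L2) R s)
  | revR {R1 R2 : List SGame} {L : List SGame} {s : ℝ} {D Dl : SGame}
      (hDl : Dl ∈ D.leftOpts) (h : Ge Dl (mk L (R1 ++ D :: R2) s)) :
      Step (mk L (R1 ++ D :: R2) s) (mk L (R1 ++ Dl.rightOpts ++ R2) s)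
  | congL {g g' : SGame} {L1 L2 R : List SGame} {s : ℝ} (h : Step g g') :
      Step (mk (L1 ++ g :: L2) R s) (mk (L1 ++ g' :: L2) R s)
  | congR {g g' : SGame} {L R1 R2 : List SGame} {s : ℝ} (h : Step g g') :
      Step (mk L (R1 ++ g :: R2) s) (mk L (R1 ++ g' :: R2) s)

end SGame

namespace SGame

lemma maxRight_le_iff {c : ℝ} :
    ∀ (t : List SGame) (g : SGame),
      maxRight g t ≤ c ↔ rightScore g ≤ c ∧ ∀ h ∈ t, rightScore h ≤ c
  | [], g => by simp [maxRight]
  | h :: t, g => by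
      rw [maxRight, max_le_iff, maxRight_le_iff t h]
      simp [and_assoc]

lemma maxRight_lt_iff {c : ℝ} :
    ∀ (t : List SGame) (g : SGame),
      maxRight g t < c ↔ rightScore g < c ∧ ∀ h ∈ t, rightScore h < c
  | [], g => by simp [maxRight]
  | h :: t, g => by
      rw [maxRight, max_lt_iff, maxRight_lt_iff t h]
      simp [and_assoc]

lemma minLeft_le_iff {c : ℝ} :
    ∀ (t : List SGame) (g : SGame),
      minLeft g t ≤ c ↔ leftScore g ≤ c ∨ ∃ h ∈ t, leftScore h ≤ c
  | [], g => by simp [minLeft]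
  | h :: t, g => by
      rw [minLeft, min_le_iff, minLeft_le_iff t h]
      simp [or_assoc]

lemma minLeft_lt_iff {c : ℝ} :
    ∀ (t : List SGame) (g : SGame),
      minLeft g t < c ↔ leftScore g < c ∨ ∃ h ∈ t, leftScore h < c
  | [], g => by simp [minLeft]
  | h :: t, g => by
      rw [minLeft, min_lt_iff, minLeft_lt_iff t h]
      simp [or_assoc]

lemma leftScore_nil (R : List SGame) (s : ℝ) : leftScore (mk [] R s) = s := by
  rw [leftScore]

lemma rightScore_nil (L : List SGame) (s : ℝ) : rightScore (mk L [] s) = s := by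
  rw [rightScore]

lemma leftScore_le_iff {L R : List SGame} {s c : ℝ} (hL : L ≠ []) :
    leftScore (mk L R s) ≤ c ↔ ∀ g ∈ L, rightScore g ≤ c := by
  cases L with
  | nil => exact absurd rfl hL
  | cons a t => rw [leftScore, maxRight_le_iff]; simp

lemma leftScore_lt_iff {L R : List SGame} {s c : ℝ} (hL : L ≠ []) :
    leftScore (mk L R s) < c ↔ ∀ g ∈ L, rightScore g < c := by
  cases L with
  | nil => exact absurd rfl hL
  | cons a t => rw [leftScore, maxRight_lt_iff]; simp

lemma rightScore_le_iff {L R : List SGame} {s c : ℝ} (hR : R ≠ []) :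
    rightScore (mk L R s) ≤ c ↔ ∃ g ∈ R, leftScore g ≤ c := by
  cases R with
  | nil => exact absurd rfl hR
  | cons a t => rw [rightScore, minLeft_le_iff]; simp

lemma rightScore_lt_iff {L R : List SGame} {s c : ℝ} (hR : R ≠ []) :
    rightScore (mk L R s) < c ↔ ∃ g ∈ R, leftScore g < c := by
  cases R with
  | nil => exact absurd rfl hR
  | cons a t => rw [rightScore, minLeft_lt_iff]; simp

lemma sum_def (L1 R1 : List SGame) (s1 : ℝ) (L2 R2 : List SGame) (s2 : ℝ) :
    sum (mk L1 R1 s1) (mk L2 R2 s2) =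
      mk ((L1.attach.map fun g => sum g.1 (mk L2 R2 s2)) ++
          (L2.attach.map fun h => sum (mk L1 R1 s1) h.1))
         ((R1.attach.map fun g => sum g.1 (mk L2 R2 s2)) ++
          (R2.attach.map fun h => sum (mk L1 R1 s1) h.1))
         (s1 + s2) := by
  rw [sum]

lemma outcome_congr {G H : SGame}
    (h1 : 0 < G.leftScore ↔ 0 < H.leftScore)
    (h2 : G.leftScore = 0 ↔ H.leftScore = 0)
    (h3 : 0 < G.rightScore ↔ 0 < H.rightScore)
    (h4 : G.rightScore = 0 ↔ H.rightScore = 0) :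
    G.outcome = H.outcome := by
  have b1 : (0 < H.leftScore) = (0 < G.leftScore) := by rw [eq_iff_iff]; exact h1.symm
  have b2 : (H.leftScore = 0) = (G.leftScore = 0) := by rw [eq_iff_iff]; exact h2.symm
  have b3 : (0 < H.rightScore) = (0 < G.rightScore) := by rw [eq_iff_iff]; exact h3.symm
  have b4 : (H.rightScore = 0) = (G.rightScore = 0) := by rw [eq_iff_iff]; exact h4.symm
  unfold outcome
  simp only [b1, b2, b3, b4]

lemma attach_map_append_ne_nil {l1 l2 : List SGame} {f : {x // x ∈ l1} → SGame}
    {g : {x // x ∈ l2} → SGame}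
    (h : ¬(l1 = [] ∧ l2 = [])) : l1.attach.map f ++ l2.attach.map g ≠ [] := by
  intro hnil
  rw [List.append_eq_nil_iff] at hnil
  apply h
  constructor
  · have := hnil.1
    rwa [List.map_eq_nil_iff, List.attach_eq_nil_iff] at this
  · have := hnil.2
    rwa [List.map_eq_nil_iff, List.attach_eq_nil_iff] at this

lemma remove_key (D E : SGame) (h : Le D E) (L Rrest : List SGame) (s : ℝ) :
    ∀ (n : ℕ) (X : SGame), sizeOf X ≤ n →
      ((((mk L (D :: Rrest) s).sum X).leftScore ≤ 0 ↔
        (((mk L (D :: E :: Rrest) s).sum X)).leftScore ≤ 0) ∧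
       ((((mk L (D :: Rrest) s).sum X).leftScore < 0 ↔
        (((mk L (D :: E :: Rrest) s).sum X)).leftScore < 0)) ∧
       ((((mk L (D :: Rrest) s).sum X).rightScore ≤ 0 ↔
        (((mk L (D :: E :: Rrest) s).sum X)).rightScore ≤ 0)) ∧
       ((((mk L (D :: Rrest) s).sum X).rightScore < 0 ↔
        (((mk L (D :: E :: Rrest) s).sum X)).rightScore < 0))) := by
  intro n
  induction n with
  | zero =>
    intro X hX
    obtain ⟨XL, XR, xs⟩ := X
    simp at hX
  | succ n ih =>
    intro X hX
    obtain ⟨XL, XR, xs⟩ := X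
    simp only [mk.sizeOf_spec] at hX
    have hszL : ∀ Y ∈ XL, sizeOf Y ≤ n := by
      intro Y hY
      have := List.sizeOf_lt_of_mem hY
      omega
    have hszR : ∀ Y ∈ XR, sizeOf Y ≤ n := by
      intro Y hY
      have := List.sizeOf_lt_of_mem hY
      omega
    rw [sum_def, sum_def]
    refine ⟨?_, ?_, ?_, ?_⟩
    · -- leftScore ≤ 0
      by_cases hc : L = [] ∧ XL = []
      · obtain ⟨rfl, rfl⟩ := hc
        simp [leftScore_nil]
      · rw [leftScore_le_iff (attach_map_append_ne_nil hc),
            leftScore_le_iff (attach_map_append_ne_nil hc)]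
        simp only [List.mem_append, List.mem_map, List.mem_attach, true_and, Subtype.exists,
          exists_prop]
        constructor
        · rintro H g (⟨a, ha, rfl⟩ | ⟨a, ha, rfl⟩)
          · exact H _ (Or.inl ⟨a, ha, rfl⟩)
          · exact ((ih a (hszL a ha)).2.2.1).mp (H _ (Or.inr ⟨a, ha, rfl⟩))
        · rintro H g (⟨a, ha, rfl⟩ | ⟨a, ha, rfl⟩)
          · exact H _ (Or.inl ⟨a, ha, rfl⟩)
          · exact ((ih a (hszL a ha)).2.2.1).mpr (H _ (Or.inr ⟨a, ha, rfl⟩))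
    · -- leftScore < 0
      by_cases hc : L = [] ∧ XL = []
      · obtain ⟨rfl, rfl⟩ := hc
        simp [leftScore_nil]
      · rw [leftScore_lt_iff (attach_map_append_ne_nil hc),
            leftScore_lt_iff (attach_map_append_ne_nil hc)]
        simp only [List.mem_append, List.mem_map, List.mem_attach, true_and, Subtype.exists,
          exists_prop]
        constructor
        · rintro H g (⟨a, ha, rfl⟩ | ⟨a, ha, rfl⟩)
          · exact H _ (Or.inl ⟨a, ha, rfl⟩)
          · exact ((ih a (hszL a ha)).2.2.2).mp (H _ (Or.inr ⟨a, ha, rfl⟩))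
        · rintro H g (⟨a, ha, rfl⟩ | ⟨a, ha, rfl⟩)
          · exact H _ (Or.inl ⟨a, ha, rfl⟩)
          · exact ((ih a (hszL a ha)).2.2.2).mpr (H _ (Or.inr ⟨a, ha, rfl⟩))
    · -- rightScore ≤ 0
      rw [rightScore_le_iff (attach_map_append_ne_nil (by simp)),
          rightScore_le_iff (attach_map_append_ne_nil (by simp))]
      simp only [List.mem_append, List.mem_map, List.mem_attach, true_and, Subtype.exists,
        exists_prop, List.mem_cons, exists_eq_or_imp]
      constructor
      · rintro ⟨g, hg, hgle⟩
        rcases hg with (rfl | ⟨a, ha, rfl⟩) | ⟨a, ha, rfl⟩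
        · exact ⟨_, Or.inl (Or.inl rfl), hgle⟩
        · exact ⟨_, Or.inl (Or.inr (Or.inr ⟨a, ha, rfl⟩)), hgle⟩
        · exact ⟨_, Or.inr ⟨a, ha, rfl⟩, ((ih a (hszR a ha)).1).mp hgle⟩
      · rintro ⟨g, hg, hgle⟩
        rcases hg with (rfl | rfl | ⟨a, ha, rfl⟩) | ⟨a, ha, rfl⟩
        · exact ⟨_, Or.inl (Or.inl rfl), hgle⟩
        · exact ⟨_, Or.inl (Or.inl rfl), (h (mk XL XR xs)).1 hgle⟩
        · exact ⟨_, Or.inl (Or.inr ⟨a, ha, rfl⟩), hgle⟩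
        · exact ⟨_, Or.inr ⟨a, ha, rfl⟩, ((ih a (hszR a ha)).1).mpr hgle⟩
    · -- rightScore < 0
      rw [rightScore_lt_iff (attach_map_append_ne_nil (by simp)),
          rightScore_lt_iff (attach_map_append_ne_nil (by simp))]
      simp only [List.mem_append, List.mem_map, List.mem_attach, true_and, Subtype.exists,
        exists_prop, List.mem_cons, exists_eq_or_imp]
      constructor
      · rintro ⟨g, hg, hglt⟩
        rcases hg with (rfl | ⟨a, ha, rfl⟩) | ⟨a, ha, rfl⟩
        · exact ⟨_, Or.inl (Or.inl rfl), hglt⟩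
        · exact ⟨_, Or.inl (Or.inr (Or.inr ⟨a, ha, rfl⟩)), hglt⟩
        · exact ⟨_, Or.inr ⟨a, ha, rfl⟩, ((ih a (hszR a ha)).2.1).mp hglt⟩
      · rintro ⟨g, hg, hglt⟩
        rcases hg with (rfl | rfl | ⟨a, ha, rfl⟩) | ⟨a, ha, rfl⟩
        · exact ⟨_, Or.inl (Or.inl rfl), hglt⟩
        · exact ⟨_, Or.inl (Or.inl rfl), (h (mk XL XR xs)).2.2.1 hglt⟩
        · exact ⟨_, Or.inl (Or.inr ⟨a, ha, rfl⟩), hglt⟩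
        · exact ⟨_, Or.inr ⟨a, ha, rfl⟩, ((ih a (hszR a ha)).2.1).mpr hglt⟩

end SGame

/-- Removing a dominated Right option preserves equality: if `D ≤ E` then
`{A, B, C, … | s | D, F, …} = {A, B, C, … | s | D, E, F, …}`. -/
theorem remove_dominated_right (D E : SGame) (L Rrest : List SGame) (s : ℝ)
    (h : SGame.Le D E) :
    SGame.gameEq (SGame.mk L (D :: Rrest) s) (SGame.mk L (D :: E :: Rrest) s) := by
  intro X
  obtain ⟨k1, k2, k3, k4⟩ := SGame.remove_key D E h L Rrest s (sizeOf X) X le_rfl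
  have key : ∀ a b : ℝ, (a ≤ 0 ↔ b ≤ 0) → (a < 0 ↔ b < 0) →
      (0 < a ↔ 0 < b) ∧ (a = 0 ↔ b = 0) := by
    intro a b H1 H2
    constructor
    · rw [← not_le, ← not_le]
      exact not_congr H1
    · constructor
      · intro hh
        refine le_antisymm (H1.mp hh.le) (not_lt.mp fun hb => ?_)
        have := H2.mpr hb
        rw [hh] at this
        exact lt_irrefl 0 this
      · intro hh
        refine le_antisymm (H1.mpr hh.le) (not_lt.mp fun hb => ?_)
        have := H2.mp hb
        rw [hh] at this
        exact lt_irrefl 0 this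
  obtain ⟨p1, p2⟩ := key _ _ k1 k2
  obtain ⟨p3, p4⟩ := key _ _ k3 k4
  exact SGame.outcome_congr p1 p2 p3 p4
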